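/- Let W₁, W₂, W₃ be vector spaces over ℂ with linear operators L₋₁⁽¹⁾ on W₁, L₋₁⁽²⁾ on W₂, L₋₁⁽³⁾ on W₃, and let μ_{n;k} : W₁ × W₂ → W₃ (n ∈ ℂ, k ∈ ℕ) be a family of bilinear maps satisfying the L(−1)-bracket relation and the L(−1)-derivative property (with respect to L₋₁⁽¹⁾). Then for all w₁ ∈ W₁, w₂ ∈ W₂, j ∈ ℕ, n ∈ ℂ and k ∈ ℕ: Σ_{i=0}^{j} ((−1)^{j−i}/(i!·(j−i)!)) · (L₋₁⁽³⁾)^i (μ_{n;k}(w₁, (L₋₁⁽²⁾)^{j−i} w₂)) = (1/j!) · μ_{n;k}((L₋₁⁽¹⁾)^j w₁, w₂) = (1/j!) · (𝔇^j M)(n,k), where M : ℂ × ℕ → W₃ is the family M(n,k) = μ_{n;k}(w₁,w₂) and 𝔇 is the formal derivative d/dx acting by (𝔇M)(n,k) = −n·M(n−1,k) + (k+1)·M(n−1,k+1). (In generating-series form this says e^{y L₋₁⁽³⁾} 𝒴(w₁, x) e^{−y L₋₁⁽²⁾} = 𝒴(e^{y L₋₁⁽¹⁾} w₁, x) = 𝒴(w₁,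 x+y).) -/

import Mathlib

/-- Proposition 3.36(a): for a family `μ` (the coefficients of
`𝒴(w₁,x)w₂ = Σ μ_{n;k}(w₁,w₂) x^{−n−1}(log x)^k`) satisfying the L(−1)-bracket relation and
the L(−1)-derivative property,
`e^{y L(−1)} 𝒴(w₁,x) e^{−y L(−1)} = 𝒴(e^{y L(−1)} w₁, x) = 𝒴(w₁, x+y)` coefficientwise. -/
theorem stmt14 {W₁ W₂ W₃ : Type*} [AddCommGroup W₁] [Module ℂ W₁]
    [AddCommGroup W₂] [Module ℂ W₂] [AddCommGroup W₃] [Module ℂ W₃]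
    (Lm1₁ : Module.End ℂ W₁) (Lm1₂ : Module.End ℂ W₂) (Lm1₃ : Module.End ℂ W₃)
    (μ : ℂ → ℕ → W₁ →ₗ[ℂ] W₂ →ₗ[ℂ] W₃)
    (hbr : ∀ (n : ℂ) (k : ℕ) (w₁ : W₁) (w₂ : W₂),
      Lm1₃ (μ n k w₁ w₂) - μ n k w₁ (Lm1₂ w₂) = μ n k (Lm1₁ w₁) w₂)
    (hderiv : ∀ (n : ℂ) (k : ℕ) (w₁ : W₁) (w₂ : W₂),
      μ n k (Lm1₁ w₁) w₂
        = (-n) • μ (n - 1) k w₁ w₂ + ((k : ℂ) + 1) • μ (n - 1) (k + 1) w₁ w₂)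
    (w₁ : W₁) (w₂ : W₂) (j : ℕ) (n : ℂ) (k : ℕ) :
    (∑ i ∈ Finset.range (j + 1),
        ((-1 : ℂ) ^ (j - i) / ((i.factorial : ℂ) * ((j - i).factorial : ℂ))) •
          (Lm1₃ ^ i) (μ n k w₁ ((Lm1₂ ^ (j - i)) w₂)))
      = (j.factorial : ℂ)⁻¹ • μ n k ((Lm1₁ ^ j) w₁) w₂
    ∧ (j.factorial : ℂ)⁻¹ • μ n k ((Lm1₁ ^ j) w₁) w₂
      = (j.factorial : ℂ)⁻¹ •
          ((fun (M : ℂ × ℕ → W₃) => fun p : ℂ × ℕ =>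
              (-p.1) • M (p.1 - 1, p.2) + ((p.2 : ℂ) + 1) • M (p.1 - 1, p.2 + 1))^[j]
            (fun p : ℂ × ℕ => μ p.1 p.2 w₁ w₂)) (n, k) := by
  constructor
  · -- Part 1
    set ℓ : Module.End ℂ (W₂ →ₗ[ℂ] W₃) := LinearMap.llcomp ℂ W₂ W₃ W₃ Lm1₃ with hℓ
    set r : Module.End ℂ (W₂ →ₗ[ℂ] W₃) := Lm1₂.lcomp ℂ W₃ with hr
    have hcomm : Commute ℓ (-r) := by
      have : Commute ℓ r := by
        ext T v
        simp [hℓ, hr, Module.End.mul_apply]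
      exact this.neg_right
    have hℓpow : ∀ (i : ℕ) (T : W₂ →ₗ[ℂ] W₃) (v : W₂), ((ℓ ^ i) T) v = (Lm1₃ ^ i) (T v) := by
      intro i
      induction i with
      | zero => intro T v; simp
      | succ i ih =>
        intro T v
        rw [pow_succ', pow_succ', Module.End.mul_apply, Module.End.mul_apply]
        show Lm1₃ (((ℓ ^ i) T) v) = Lm1₃ ((Lm1₃ ^ i) (T v))
        rw [ih]
    have hrpow : ∀ (m : ℕ) (T : W₂ →ₗ[ℂ] W₃) (v : W₂), ((r ^ m) T) v = T ((Lm1₂ ^ m) v) := by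
      intro m
      induction m with
      | zero => intro T v; simp
      | succ m ih =>
        intro T v
        rw [pow_succ r, pow_succ' Lm1₂, Module.End.mul_apply, Module.End.mul_apply, ih (r T) v]
        rfl
    have key : ∀ m : ℕ, μ n k ((Lm1₁ ^ m) w₁) = ((ℓ - r) ^ m) (μ n k w₁) := by
      intro m
      induction m with
      | zero => simp
      | succ m ih =>
        rw [pow_succ', Module.End.mul_apply, pow_succ', Module.End.mul_apply, ← ih]
        ext v
        rw [← hbr n k ((Lm1₁ ^ m) w₁) v]
        simp [hℓ, hr, Module.End.mul_apply]
    have hfac : ∀ i ∈ Finset.range (j + 1),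
        ((-1 : ℂ) ^ (j - i) / ((i.factorial : ℂ) * ((j - i).factorial : ℂ)))
          = (j.factorial : ℂ)⁻¹ * ((-1 : ℂ) ^ (j - i) * (j.choose i : ℂ)) := by
      intro i hi
      have hij : i ≤ j := Nat.lt_succ_iff.mp (Finset.mem_range.mp hi)
      have h1 : (j.choose i : ℂ) * (i.factorial : ℂ) * ((j - i).factorial : ℂ)
          = (j.factorial : ℂ) := by
        exact_mod_cast congrArg (Nat.cast : ℕ → ℂ)
          (Nat.choose_mul_factorial_mul_factorial hij)
      have h2 : ((i.factorial : ℂ) * ((j - i).factorial : ℂ)) ≠ 0 :=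
        mul_ne_zero (Nat.cast_ne_zero.mpr i.factorial_ne_zero)
          (Nat.cast_ne_zero.mpr (j - i).factorial_ne_zero)
      have h3 : (j.factorial : ℂ) ≠ 0 := Nat.cast_ne_zero.mpr j.factorial_ne_zero
      have h4 : (j.choose i : ℂ) ≠ 0 := Nat.cast_ne_zero.mpr (Nat.choose_pos hij).ne'
      field_simp
      rw [← h1]; field_simp; exact div_self h2
    rw [Finset.sum_congr rfl fun i hi => by rw [hfac i hi, mul_smul]]
    rw [← Finset.smul_sum]
    congr 1
    rw [key j, sub_eq_add_neg, hcomm.add_pow, LinearMap.sum_apply, LinearMap.sum_apply]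
    apply Finset.sum_congr rfl
    intro i hi
    have hnegr : -r = (-1 : ℂ) • r := (neg_one_smul ℂ r).symm
    have hnr : (-r) ^ (j - i) = ((-1 : ℂ) ^ (j - i)) • (r ^ (j - i)) := by
      rw [hnegr, smul_pow]
    have hc : ((ℓ ^ i * (-r) ^ (j - i) * (j.choose i : Module.End ℂ (W₂ →ₗ[ℂ] W₃)))
        (μ n k w₁)) w₂
        = (j.choose i : ℂ) • (((ℓ ^ i) (((-r) ^ (j - i)) (μ n k w₁))) w₂) := by
      rw [Module.End.mul_apply, Module.End.mul_apply, Module.End.natCast_apply,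
        ← Nat.cast_smul_eq_nsmul ℂ, map_smul, map_smul, LinearMap.smul_apply]
    rw [hc, hnr, LinearMap.smul_apply, map_smul, LinearMap.smul_apply, hℓpow, hrpow,
      smul_smul, mul_comm]
  · -- Part 2
    congr 1
    induction j generalizing n k with
    | zero => simp
    | succ m ih =>
      rw [pow_succ', Module.End.mul_apply, hderiv, Function.iterate_succ_apply', ih, ih]
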